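/- In ℂ³ ⊗ ℂ³ with standard basis vectors e_i ⊗ e_j, the linear span of the set { conj(ψ) ⊗ ψ : ψ ∈ ℂ³ with |ψ₁| = |ψ₂| = |ψ₃| = 1 } equals the orthogonal complement of span{ e₁⊗e₁ − e₂⊗e₂, e₂⊗e₂ − e₃⊗e₃ }; in particular this span is 7-dimensional. -/

import Mathlib

open BigOperators

noncomputable def gv (a b c : ℂ) : EuclideanSpace ℂ (Fin 3 × Fin 3) :=
  WithLp.toLp 2 (fun p : Fin 3 × Fin 3 => star (![a,b,c] p.1) * ![a,b,c] p.2)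

theorem mem_orthogonal_span_iff' {E : Type*} [NormedAddCommGroup E] [InnerProductSpace ℂ E]
    (s : Set E) (v : E) :
    v ∈ (Submodule.span ℂ s)ᗮ ↔ ∀ u ∈ s, (inner ℂ u v : ℂ) = 0 := by
  rw [Submodule.mem_orthogonal]
  constructor
  · intro h u hu; exact h u (Submodule.subset_span hu)
  · intro h u hu
    induction hu using Submodule.span_induction with
    | mem x hx => exact h x hx
    | zero => simp
    | add x y _ _ hx hy => rw [inner_add_left, hx, hy, add_zero]
    | smul a x _ hx => rw [inner_smul_left, hx, mul_zero]

set_option maxHeartbeats 2000000 in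
set_option maxRecDepth 8000 in
theorem span_unimodular_vectors (S : Set (EuclideanSpace ℂ (Fin 3 × Fin 3)))
    (hS : S = { v | ∃ ψ : Fin 3 → ℂ, (∀ i, ‖ψ i‖ = 1) ∧
      ∀ p : Fin 3 × Fin 3, v p = star (ψ p.1) * ψ p.2 }) :
    Submodule.span ℂ S =
        (Submodule.span ℂ
          {(EuclideanSpace.single ((0 : Fin 3), (0 : Fin 3)) (1 : ℂ) -
              EuclideanSpace.single (1, 1) 1),
           (EuclideanSpace.single ((1 : Fin 3), (1 : Fin 3)) (1 : ℂ) -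
              EuclideanSpace.single (2, 2) 1)})ᗮ ∧
      Module.finrank ℂ (Submodule.span ℂ S) = 7 := by
  set d1 : EuclideanSpace ℂ (Fin 3 × Fin 3) :=
    EuclideanSpace.single ((0 : Fin 3), (0 : Fin 3)) (1 : ℂ) -
      EuclideanSpace.single (1, 1) 1 with hd1
  set d2 : EuclideanSpace ℂ (Fin 3 × Fin 3) :=
    EuclideanSpace.single ((1 : Fin 3), (1 : Fin 3)) (1 : ℂ) -
      EuclideanSpace.single (2, 2) 1 with hd2
  -- membership of generators
  have hmem : ∀ a b c : ℂ, ‖a‖ = 1 → ‖b‖ = 1 → ‖c‖ = 1 →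
      gv a b c ∈ Submodule.span ℂ S := by
    intro a b c ha hb hc
    apply Submodule.subset_span
    rw [hS]
    refine ⟨![a,b,c], ?_, fun p => rfl⟩
    intro i; fin_cases i <;> simpa
  have hI : ‖Complex.I‖ = 1 := by simp
  have h1 : ‖(1:ℂ)‖ = 1 := by simp
  have hm1 : ‖(-1:ℂ)‖ = 1 := by simp
  have hmI : ‖-Complex.I‖ = 1 := by simp
  -- shorthand
  let Ee : Fin 3 × Fin 3 → EuclideanSpace ℂ (Fin 3 × Fin 3) :=
    fun p => EuclideanSpace.single p (1:ℂ)
  -- Stage 1 vectors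
  have hA : Ee (0,1) + Ee (0,2) ∈ Submodule.span ℂ S := by
    have hid : Ee (0,1) + Ee (0,2)
        = (4:ℂ)⁻¹ • (gv 1 1 1 + Complex.I • gv Complex.I 1 1 - gv (-1) 1 1
            - Complex.I • gv (-Complex.I) 1 1) := by
      ext p; fin_cases p <;> simp [Ee, gv, EuclideanSpace.single_apply, Prod.ext_iff] <;> ring_nf
    rw [hid]
    exact Submodule.smul_mem _ _ (Submodule.sub_mem _ (Submodule.sub_mem _
      (Submodule.add_mem _ (hmem 1 1 1 h1 h1 h1) (Submodule.smul_mem _ _ (hmem _ 1 1 hI h1 h1)))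
      (hmem (-1) 1 1 hm1 h1 h1)) (Submodule.smul_mem _ _ (hmem _ 1 1 hmI h1 h1)))
  have hC : Ee (2,0) + Ee (2,1) ∈ Submodule.span ℂ S := by
    have hid : Ee (2,0) + Ee (2,1)
        = (4:ℂ)⁻¹ • (gv 1 1 1 + Complex.I • gv 1 1 Complex.I - gv 1 1 (-1)
            - Complex.I • gv 1 1 (-Complex.I)) := by
      ext p; fin_cases p <;> simp [Ee, gv, EuclideanSpace.single_apply, Prod.ext_iff] <;> ring_nf
    rw [hid]
    exact Submodule.smul_mem _ _ (Submodule.sub_mem _ (Submodule.sub_mem _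
      (Submodule.add_mem _ (hmem 1 1 1 h1 h1 h1) (Submodule.smul_mem _ _ (hmem 1 1 _ h1 h1 hI)))
      (hmem 1 1 (-1) h1 h1 hm1)) (Submodule.smul_mem _ _ (hmem 1 1 _ h1 h1 hmI)))
  have hC' : Ee (0,2) + Ee (1,2) ∈ Submodule.span ℂ S := by
    have hid : Ee (0,2) + Ee (1,2)
        = (4:ℂ)⁻¹ • (gv 1 1 1 - Complex.I • gv 1 1 Complex.I - gv 1 1 (-1)
            + Complex.I • gv 1 1 (-Complex.I)) := by
      ext p; fin_cases p <;> simp [Ee, gv, EuclideanSpace.single_apply, Prod.ext_iff] <;> ring_nf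
    rw [hid]
    exact Submodule.smul_mem _ _ (Submodule.add_mem _ (Submodule.sub_mem _
      (Submodule.sub_mem _ (hmem 1 1 1 h1 h1 h1) (Submodule.smul_mem _ _ (hmem 1 1 _ h1 h1 hI)))
      (hmem 1 1 (-1) h1 h1 hm1)) (Submodule.smul_mem _ _ (hmem 1 1 _ h1 h1 hmI)))
  have hE : Ee (0,1) + Ee (1,2) ∈ Submodule.span ℂ S := by
    have hid : Ee (0,1) + Ee (1,2)
        = (4:ℂ)⁻¹ • (gv 1 1 1 + Complex.I • gv (-1) Complex.I 1 - gv 1 (-1) 1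
            - Complex.I • gv (-1) (-Complex.I) 1) := by
      ext p; fin_cases p <;> simp [Ee, gv, EuclideanSpace.single_apply, Prod.ext_iff] <;> ring_nf
    rw [hid]
    exact Submodule.smul_mem _ _ (Submodule.sub_mem _ (Submodule.sub_mem _
      (Submodule.add_mem _ (hmem 1 1 1 h1 h1 h1) (Submodule.smul_mem _ _ (hmem _ _ 1 hm1 hI h1)))
      (hmem 1 (-1) 1 h1 hm1 h1)) (Submodule.smul_mem _ _ (hmem _ _ 1 hm1 hmI h1)))
  have hE' : Ee (1,0) + Ee (2,1) ∈ Submodule.span ℂ S := by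
    have hid : Ee (1,0) + Ee (2,1)
        = (4:ℂ)⁻¹ • (gv 1 1 1 - Complex.I • gv (-1) Complex.I 1 - gv 1 (-1) 1
            + Complex.I • gv (-1) (-Complex.I) 1) := by
      ext p; fin_cases p <;> simp [Ee, gv, EuclideanSpace.single_apply, Prod.ext_iff] <;> ring_nf
    rw [hid]
    exact Submodule.smul_mem _ _ (Submodule.add_mem _ (Submodule.sub_mem _
      (Submodule.sub_mem _ (hmem 1 1 1 h1 h1 h1) (Submodule.smul_mem _ _ (hmem _ _ 1 hm1 hI h1)))
      (hmem 1 (-1) 1 h1 hm1 h1)) (Submodule.smul_mem _ _ (hmem _ _ 1 hm1 hmI h1)))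
  have hF : Ee (0,2) + Ee (2,0) ∈ Submodule.span ℂ S := by
    have hid : Ee (0,2) + Ee (2,0)
        = (4:ℂ)⁻¹ • (gv 1 1 1 - gv (-1) Complex.I 1 + gv 1 (-1) 1
            - gv (-1) (-Complex.I) 1) := by
      ext p; fin_cases p <;> simp [Ee, gv, EuclideanSpace.single_apply, Prod.ext_iff] <;> ring_nf
    rw [hid]
    exact Submodule.smul_mem _ _ (Submodule.sub_mem _ (Submodule.add_mem _
      (Submodule.sub_mem _ (hmem 1 1 1 h1 h1 h1) (hmem _ _ 1 hm1 hI h1))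
      (hmem 1 (-1) 1 h1 hm1 h1)) (hmem _ _ 1 hm1 hmI h1))
  have hG : Ee (0,0) + Ee (1,1) + Ee (2,2) ∈ Submodule.span ℂ S := by
    have hid : Ee (0,0) + Ee (1,1) + Ee (2,2)
        = (4:ℂ)⁻¹ • (gv 1 1 1 + gv (-1) Complex.I 1 + gv 1 (-1) 1
            + gv (-1) (-Complex.I) 1) := by
      ext p; fin_cases p <;> simp [Ee, gv, EuclideanSpace.single_apply, Prod.ext_iff] <;> ring_nf
    rw [hid]
    exact Submodule.smul_mem _ _ (Submodule.add_mem _ (Submodule.add_mem _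
      (Submodule.add_mem _ (hmem 1 1 1 h1 h1 h1) (hmem _ _ 1 hm1 hI h1))
      (hmem 1 (-1) 1 h1 hm1 h1)) (hmem _ _ 1 hm1 hmI h1))
  -- Stage 2: individual off-diagonal singles
  have h02 : Ee (0,2) ∈ Submodule.span ℂ S := by
    have hid : Ee (0,2) = (2:ℂ)⁻¹ • ((Ee (0,1) + Ee (0,2)) - (Ee (0,1) + Ee (1,2))
        + (Ee (0,2) + Ee (1,2))) := by
      ext p; fin_cases p <;> simp [Ee, EuclideanSpace.single_apply, Prod.ext_iff] <;> ring_nf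
    rw [hid]
    exact Submodule.smul_mem _ _ (Submodule.add_mem _ (Submodule.sub_mem _ hA hE) hC')
  have h12 : Ee (1,2) ∈ Submodule.span ℂ S := by
    have hid : Ee (1,2) = (Ee (0,2) + Ee (1,2)) - Ee (0,2) := by abel
    rw [hid]; exact Submodule.sub_mem _ hC' h02
  have h01 : Ee (0,1) ∈ Submodule.span ℂ S := by
    have hid : Ee (0,1) = (Ee (0,1) + Ee (0,2)) - Ee (0,2) := by abel
    rw [hid]; exact Submodule.sub_mem _ hA h02
  have h20 : Ee (2,0) ∈ Submodule.span ℂ S := by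
    have hid : Ee (2,0) = (Ee (0,2) + Ee (2,0)) - Ee (0,2) := by abel
    rw [hid]; exact Submodule.sub_mem _ hF h02
  have h21 : Ee (2,1) ∈ Submodule.span ℂ S := by
    have hid : Ee (2,1) = (Ee (2,0) + Ee (2,1)) - Ee (2,0) := by abel
    rw [hid]; exact Submodule.sub_mem _ hC h20
  have h10 : Ee (1,0) ∈ Submodule.span ℂ S := by
    have hid : Ee (1,0) = (Ee (1,0) + Ee (2,1)) - Ee (2,1) := by abel
    rw [hid]; exact Submodule.sub_mem _ hE' h21
  -- first inclusion: span S ≤ Wᗮ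
  have hle : Submodule.span ℂ S ≤ (Submodule.span ℂ ({d1, d2} :
      Set (EuclideanSpace ℂ (Fin 3 × Fin 3))))ᗮ := by
    rw [Submodule.span_le]
    intro v hv
    rw [hS] at hv
    obtain ⟨ψ, habs, hvp⟩ := hv
    have hdiag : ∀ i, star (ψ i) * ψ i = 1 := by
      intro i
      rw [Complex.star_def, ← Complex.normSq_eq_conj_mul_self, ← Complex.sq_norm, habs i]
      norm_num
    rw [SetLike.mem_coe, mem_orthogonal_span_iff']
    rintro u (rfl | rfl) <;>
      simp only [hd1, hd2, inner_sub_left, EuclideanSpace.inner_single_left, map_one, one_mul] <;>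
      rw [hvp, hvp]
    · show star (ψ 0) * ψ 0 - star (ψ 1) * ψ 1 = 0
      rw [hdiag, hdiag, sub_self]
    · show star (ψ 1) * ψ 1 - star (ψ 2) * ψ 2 = 0
      rw [hdiag, hdiag, sub_self]
  have hge : (Submodule.span ℂ ({d1, d2} :
      Set (EuclideanSpace ℂ (Fin 3 × Fin 3))))ᗮ ≤ Submodule.span ℂ S := by
    intro v hv
    have hv1 : (inner ℂ d1 v : ℂ) = 0 :=
      Submodule.inner_right_of_mem_orthogonal
        (Submodule.subset_span (by simp)) hv
    have hv2 : (inner ℂ d2 v : ℂ) = 0 :=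
      Submodule.inner_right_of_mem_orthogonal
        (Submodule.subset_span (by simp)) hv
    simp only [hd1, hd2, inner_sub_left, EuclideanSpace.inner_single_left, map_one, one_mul,
      sub_eq_zero] at hv1 hv2
    have hid : v = v (0,1) • Ee (0,1) + v (0,2) • Ee (0,2) + v (1,0) • Ee (1,0)
        + v (1,2) • Ee (1,2) + v (2,0) • Ee (2,0) + v (2,1) • Ee (2,1)
        + v (0,0) • (Ee (0,0) + Ee (1,1) + Ee (2,2)) := by
      ext p
      fin_cases p <;>
        simp [Ee, EuclideanSpace.single_apply, Prod.ext_iff]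
      · exact hv1.symm
      · show v (2,2) = v (0,0); rw [hv1, hv2]
    rw [hid]
    exact Submodule.add_mem _ (Submodule.add_mem _ (Submodule.add_mem _ (Submodule.add_mem _
      (Submodule.add_mem _ (Submodule.add_mem _ (Submodule.smul_mem _ _ h01)
        (Submodule.smul_mem _ _ h02)) (Submodule.smul_mem _ _ h10))
        (Submodule.smul_mem _ _ h12)) (Submodule.smul_mem _ _ h20))
        (Submodule.smul_mem _ _ h21)) (Submodule.smul_mem _ _ hG)
  have heq : Submodule.span ℂ S = (Submodule.span ℂ ({d1, d2} :
      Set (EuclideanSpace ℂ (Fin 3 × Fin 3))))ᗮ := le_antisymm hle hge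
  refine ⟨heq, ?_⟩
  rw [heq]
  -- dimension count
  have hrange : ({d1, d2} : Set (EuclideanSpace ℂ (Fin 3 × Fin 3))) = Set.range ![d1, d2] := by
    ext x; simp [Fin.exists_fin_two, eq_comm]; tauto
  have hind : LinearIndependent ℂ ![d1, d2] := by
    rw [linearIndependent_fin2]
    constructor
    · intro h
      have h' := congrArg (fun w : EuclideanSpace ℂ (Fin 3 × Fin 3) => w ((1:Fin 3),(1:Fin 3))) h
      simp [hd2, EuclideanSpace.single_apply, Prod.ext_iff] at h'
    · intro a h
      have h' := congrArg (fun w : EuclideanSpace ℂ (Fin 3 × Fin 3) => w ((0:Fin 3),(0:Fin 3))) h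
      simp [hd1, hd2, EuclideanSpace.single_apply, Prod.ext_iff] at h'
  have h2 : Module.finrank ℂ (Submodule.span ℂ ({d1, d2} :
      Set (EuclideanSpace ℂ (Fin 3 × Fin 3)))) = 2 := by
    rw [hrange, finrank_span_eq_card hind]
    simp
  have htot := Submodule.finrank_add_finrank_orthogonal
    (Submodule.span ℂ ({d1, d2} : Set (EuclideanSpace ℂ (Fin 3 × Fin 3))))
  rw [h2, finrank_euclideanSpace] at htot
  simp at htot
  omega
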